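/- With $A_p = \sqrt{2}\left(\frac{\Gamma((p+1)/2)}{\sqrt{\pi}}\right)^{1/p}$, the sequence $X_m := A_{\frac{2m}{m+2}}^{-m/2}$ converges to $\frac{e^{1-\gamma/2}}{\sqrt{2}}$ as $m \to \infty$, where $\gamma$ is the Euler--Mascheroni constant. -/

import Mathlib

open Real Filter

noncomputable def khinchineA (p : ℝ) : ℝ :=
  Real.sqrt 2 * (Real.Gamma ((p + 1) / 2) / Real.sqrt π) ^ (1 / p)

local notation "γ" => Real.eulerMascheroniConstant

lemma gamma_three_half' : Real.Gamma (3 / 2) = Real.sqrt π / 2 := by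
  have h : (3 / 2 : ℝ) = 1 / 2 + 1 := by norm_num
  rw [h, Real.Gamma_add_one (by norm_num), Real.Gamma_one_half_eq]
  ring

lemma hasDerivAt_Gamma_three_half' :
    HasDerivAt Real.Gamma (1 * Real.Gamma (1 / 2) + (1 / 2) * (-√π * (γ + 2 * Real.log 2) * 1))
      (3 / 2) := by
  have h12 : HasDerivAt Real.Gamma (-√π * (γ + 2 * Real.log 2)) ((3 / 2 : ℝ) - 1) := by
    have : (3 / 2 : ℝ) - 1 = 1 / 2 := by norm_num
    rw [this]; exact Real.hasDerivAt_Gamma_one_half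
  have hsub : HasDerivAt (fun x : ℝ => x - 1) 1 (3 / 2) := (hasDerivAt_id _).sub_const 1
  have hcomp : HasDerivAt (fun x : ℝ => Real.Gamma (x - 1))
      (-√π * (γ + 2 * Real.log 2) * 1) (3 / 2) := by exact h12.comp (3/2) hsub
  have hmul := hsub.mul hcomp
  have heq : Real.Gamma =ᶠ[nhds (3 / 2 : ℝ)] fun x : ℝ => (x - 1) * Real.Gamma (x - 1) := by
    filter_upwards [Ioi_mem_nhds (by norm_num : (1 : ℝ) < 3 / 2)] with x hx
    have hx1 : (1 : ℝ) < x := hx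
    have h0 : x - 1 ≠ 0 := by intro h; nlinarith
    have := Real.Gamma_add_one h0
    rw [sub_add_cancel] at this
    simp [this]
  have := hmul.congr_of_eventuallyEq heq
  convert this using 2
  · rfl
  · rfl
  all_goals norm_num

lemma hasDerivAt_logGamma_three_half' :
    HasDerivAt (fun x : ℝ => Real.log (Real.Gamma x)) (2 - γ - 2 * Real.log 2) (3 / 2) := by
  have hΓpos : 0 < Real.Gamma (3 / 2) := Real.Gamma_pos_of_pos (by norm_num)
  have h := hasDerivAt_Gamma_three_half'.log hΓpos.ne'
  convert h using 1
  rw [gamma_three_half', Real.Gamma_one_half_eq]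
  have hπ : Real.sqrt π ≠ 0 := (Real.sqrt_pos.mpr Real.pi_pos).ne'
  field_simp
  ring

theorem khinchineA_seq_tendsto :
    Tendsto (fun m : ℕ => khinchineA (2 * (m : ℝ) / ((m : ℝ) + 2)) ^ (-((m : ℝ) / 2)))
      atTop (nhds (Real.exp (1 - Real.eulerMascheroniConstant / 2) / Real.sqrt 2)) := by
  set ψ : ℝ := 2 - γ - 2 * Real.log 2 with hψ
  -- the inner argument tends to 3/2 within the punctured nhd
  have htend0 : Tendsto (fun m : ℕ => 2 / ((m : ℝ) + 2)) atTop (nhds 0) := by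
    apply Tendsto.div_atTop tendsto_const_nhds
    exact tendsto_atTop_add_const_right _ 2 tendsto_natCast_atTop_atTop
  have hxm : Tendsto (fun m : ℕ => 3 / 2 - 2 / ((m : ℝ) + 2)) atTop (nhdsWithin (3 / 2) {(3:ℝ)/2}ᶜ) := by
    apply tendsto_nhdsWithin_of_tendsto_nhds_of_eventually_within
    · simpa using tendsto_const_nhds.sub htend0
    · filter_upwards with m
      have h1 : (0:ℝ) < 2 / ((m : ℝ) + 2) := by positivity
      simp only [Set.mem_compl_iff, Set.mem_singleton_iff, sub_eq_self]
      exact h1.ne'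
  have hslope : Tendsto (fun m : ℕ =>
      (Real.log (Real.Gamma (3 / 2 - 2 / ((m : ℝ) + 2))) - Real.log (Real.Gamma (3 / 2))) /
        ((3 / 2 - 2 / ((m : ℝ) + 2)) - 3 / 2)) atTop (nhds ψ) := by
    have h := (hasDerivAt_iff_tendsto_slope.mp hasDerivAt_logGamma_three_half').comp hxm
    simpa only [Function.comp_def, slope_def_field, div_eq_mul_inv] using h
  have hg : Tendsto (fun m : ℕ => (1 / 2) * Real.log 2 + (1 / 2) *
      ((Real.log (Real.Gamma (3 / 2 - 2 / ((m : ℝ) + 2))) - Real.log (Real.Gamma (3 / 2))) /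
        ((3 / 2 - 2 / ((m : ℝ) + 2)) - 3 / 2))) atTop
      (nhds ((1 / 2) * Real.log 2 + (1 / 2) * ψ)) :=
    tendsto_const_nhds.add (tendsto_const_nhds.mul hslope)
  have hfinal := (Real.continuous_exp.tendsto _).comp hg
  have hsqrt : Real.exp ((1 / 2) * Real.log 2) = Real.sqrt 2 := by
    rw [mul_comm, ← Real.rpow_def_of_pos (by norm_num : (0:ℝ) < 2), ← Real.sqrt_eq_rpow]
  have hlim : Real.exp ((1 / 2) * Real.log 2 + (1 / 2) * ψ)
      = Real.exp (1 - γ / 2) / Real.sqrt 2 := by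
    have h1 : (1 / 2) * Real.log 2 + (1 / 2) * ψ = (1 - γ / 2) - (1 / 2) * Real.log 2 := by
      rw [hψ]; ring
    rw [h1, Real.exp_sub, hsqrt]
  rw [hlim] at hfinal
  apply hfinal.congr'
  filter_upwards [eventually_ge_atTop 1] with m hm
  simp only [Function.comp_apply]
  set a : ℝ := (m : ℝ) with ha_def
  have ha : 1 ≤ a := by rw [ha_def]; exact_mod_cast hm
  have ha0 : 0 < a := by linarith
  have ha2 : 0 < a + 2 := by linarith
  have hxval : (2 * a / (a + 2) + 1) / 2 = 3 / 2 - 2 / (a + 2) := by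
    field_simp; ring
  have hfrac : 2 / (a + 2) ≤ 2 / 3 := by
    apply div_le_div_of_nonneg_left (by norm_num) (by norm_num) (by linarith)
  have hxpos : 0 < 3 / 2 - 2 / (a + 2) := by linarith
  have hΓ : 0 < Real.Gamma (3 / 2 - 2 / (a + 2)) := Real.Gamma_pos_of_pos hxpos
  have hsπ : 0 < Real.sqrt π := Real.sqrt_pos.mpr Real.pi_pos
  have hR : 0 < Real.Gamma (3 / 2 - 2 / (a + 2)) / Real.sqrt π := div_pos hΓ hsπ
  have hA : 0 < khinchineA (2 * a / (a + 2)) := by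
    unfold khinchineA
    rw [hxval]
    positivity
  rw [Real.rpow_def_of_pos hA, Real.exp_eq_exp]
  unfold khinchineA
  rw [hxval, Real.log_mul (by positivity) (Real.rpow_pos_of_pos hR _).ne',
    Real.log_rpow hR, Real.log_sqrt (by norm_num : (0:ℝ) ≤ 2),
    Real.log_div hΓ.ne' hsπ.ne', Real.log_sqrt Real.pi_pos.le]
  have hlog32 : Real.log (Real.Gamma (3 / 2)) = Real.log π / 2 - Real.log 2 := by
    rw [gamma_three_half', Real.log_div hsπ.ne' (by norm_num), Real.log_sqrt Real.pi_pos.le]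
  rw [hlog32]
  have hd : (3 / 2 - 2 / (a + 2)) - 3 / 2 = -(2 / (a + 2)) := by ring
  rw [hd]
  field_simp
  ring
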